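/- Let μ, n, α₂, h, N₃ be positive reals with μ < n, and set R_c = 1 − (μ−n)²/(4n·α₂(h+N₃n)). If R_c < R₀ < 1, then the quadratic n·w² + (μ−n)·w + α₂(h+N₃n)(1−R₀) = 0 has exactly two distinct positive real roots. -/

import Mathlib

/-- If μ < n and R_c < R₀ < 1, the endemic quadratic has exactly two
distinct positive real roots. -/
theorem endemic_two_positive_roots
    (μ n α₂ h N₃ R₀ : ℝ)
    (hμ : 0 < μ) (hn : 0 < n) (hα₂ : 0 < α₂) (hh : 0 < h) (hN₃ : 0 < N₃)
    (hμn : μ < n)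
    (hRc : 1 - (μ - n) ^ 2 / (4 * n * (α₂ * (h + N₃ * n))) < R₀)
    (hR1 : R₀ < 1) :
    ∃ w₁ w₂ : ℝ, 0 < w₁ ∧ 0 < w₂ ∧ w₁ ≠ w₂ ∧
      n * w₁ ^ 2 + (μ - n) * w₁ + α₂ * (h + N₃ * n) * (1 - R₀) = 0 ∧
      n * w₂ ^ 2 + (μ - n) * w₂ + α₂ * (h + N₃ * n) * (1 - R₀) = 0 ∧
      ∀ w : ℝ, 0 < w →
        n * w ^ 2 + (μ - n) * w + α₂ * (h + N₃ * n) * (1 - R₀) = 0 →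
        w = w₁ ∨ w = w₂ := by
  set K : ℝ := α₂ * (h + N₃ * n) with hK
  have hKpos : 0 < K := by positivity
  have hc : 0 < K * (1 - R₀) := by nlinarith
  set D : ℝ := (μ - n) ^ 2 - 4 * n * (K * (1 - R₀)) with hD
  have h4 : 0 < 4 * n * K := by positivity
  have hDpos : 0 < D := by
    have h1 : 1 - R₀ < (μ - n) ^ 2 / (4 * n * K) := by linarith
    have h2 := (lt_div_iff₀ h4).mp h1
    nlinarith
  set s : ℝ := Real.sqrt D with hs
  have hs2 : s ^ 2 = D := Real.sq_sqrt hDpos.le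
  have hspos : 0 < s := Real.sqrt_pos.mpr hDpos
  have hslt : s < n - μ := by nlinarith [hs2, hspos]
  have h2n : (2 * n) ≠ 0 := by positivity
  set w₁ : ℝ := (n - μ - s) / (2 * n) with hw₁
  set w₂ : ℝ := (n - μ + s) / (2 * n) with hw₂
  have hw₁pos : 0 < w₁ := by
    apply div_pos (by linarith) (by linarith)
  have hw₂pos : 0 < w₂ := by
    apply div_pos (by nlinarith) (by linarith)
  have key : ∀ w : ℝ, n * (w - w₁) * (w - w₂) = n * w ^ 2 + (μ - n) * w + K * (1 - R₀) := by
    intro w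
    rw [hw₁, hw₂]
    field_simp
    linear_combination (-1 : ℝ) * hs2
  refine ⟨w₁, w₂, hw₁pos, hw₂pos, ?_, ?_, ?_, ?_⟩
  · intro hEq
    rw [hw₁, hw₂, div_eq_div_iff h2n h2n] at hEq
    have : s = 0 := by nlinarith
    exact hspos.ne' this
  · have h := key w₁; simp at h; linarith
  · have h := key w₂; simp at h; linarith
  · intro w _ hw
    have := (key w).trans hw
    rcases mul_eq_zero.mp this with h1 | h2
    · rcases mul_eq_zero.mp h1 with h0 | h1
      · exact absurd h0 hn.ne'
      · exact Or.inl (by linarith)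
    · exact Or.inr (by linarith)
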